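/- Let A : F → E be linear with Ax ∈ K\{0} strictly feasible, L = Image(A). Then ν(L) ≤ ‖A⁻¹‖ · dist(A, I), where ‖A⁻¹‖ := max_{x ∈ Image(A), ‖x‖ ≤ 1} min_{w : Aw = x} |w|. -/

import Mathlib

open RealInnerProductSpace

/-- A (possibly non-Euclidean) norm, given as a function. -/
def IsNorm {E : Type*} [NormedAddCommGroup E] [InnerProductSpace ℝ E] (N : E → ℝ) : Prop :=
  (∀ x, 0 ≤ N x) ∧ (∀ x, N x = 0 ↔ x = 0) ∧
    (∀ (c : ℝ) (x : E), N (c • x) = |c| * N x) ∧ (∀ x y, N (x + y) ≤ N x + N y)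

/-- The dual norm `‖u‖* = max_{N x = 1} ⟪u,x⟫`. -/
noncomputable def dualNorm {E : Type*} [NormedAddCommGroup E] [InnerProductSpace ℝ E]
    (N : E → ℝ) (u : E) : ℝ :=
  sSup {r | ∃ x, N x = 1 ∧ r = ⟪u, x⟫}

/-- The dual cone `K* = {u : ⟪u,x⟫ ≥ 0 for all x ∈ K}`. -/
def dualCone {E : Type*} [NormedAddCommGroup E] [InnerProductSpace ℝ E] (K : Set E) :
    Set E := {u | ∀ x ∈ K, 0 ≤ ⟪u, x⟫}

/-- `ν(L) = min {‖u − y‖* : u ∈ K*, y ∈ L^⊥, ‖u‖* = 1}`. -/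
noncomputable def nuMeasure {E : Type*} [NormedAddCommGroup E] [InnerProductSpace ℝ E]
    (N : E → ℝ) (K : Set E) (L : Submodule ℝ E) : ℝ :=
  sInf {r | ∃ u y, u ∈ dualCone K ∧ y ∈ Lᗮ ∧ dualNorm N u = 1 ∧ r = dualNorm N (u - y)}

/-- The operator norm `‖A‖ = max_{|w| ≤ 1} ‖A w‖` of `A : F → E`, with respect to the
norm `NF` on `F` and the norm `NE` on `E`. -/
noncomputable def opNorm {F E : Type*} [NormedAddCommGroup F] [InnerProductSpace ℝ F]
    [NormedAddCommGroup E] [InnerProductSpace ℝ E]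
    (NF : F → ℝ) (NE : E → ℝ) (A : F →ₗ[ℝ] E) : ℝ :=
  sSup {r | ∃ w, NF w ≤ 1 ∧ r = NE (A w)}

/-- Renegar's distance to infeasibility of `A x ∈ K \ {0}`: the infimum of `‖A − Ã‖`
over `Ã` whose adjoint kills some nonzero element of `K*`. -/
noncomputable def distToInfeas {F E : Type*} [NormedAddCommGroup F] [InnerProductSpace ℝ F]
    [FiniteDimensional ℝ F] [NormedAddCommGroup E] [InnerProductSpace ℝ E]
    [FiniteDimensional ℝ E] (NF : F → ℝ) (NE : E → ℝ) (K : Set E) (A : F →ₗ[ℝ] E) : ℝ :=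
  sInf {r | ∃ B : F →ₗ[ℝ] E,
    (∃ w, w ∈ dualCone K ∧ w ≠ 0 ∧ LinearMap.adjoint B w = 0) ∧
    r = opNorm NF NE (A - B)}

/-- The norm of the set-valued inverse,
`‖A⁻¹‖ = max_{x ∈ Image(A), ‖x‖ ≤ 1} min_{w : A w = x} |w|`. -/
noncomputable def invNorm {F E : Type*} [NormedAddCommGroup F] [InnerProductSpace ℝ F]
    [NormedAddCommGroup E] [InnerProductSpace ℝ E]
    (NF : F → ℝ) (NE : E → ℝ) (A : F →ₗ[ℝ] E) : ℝ :=
  sSup {r | ∃ x ∈ LinearMap.range A, NE x ≤ 1 ∧ r = sInf {s | ∃ w, A w = x ∧ s = NF w}}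

set_option linter.unusedSectionVars false
set_option maxHeartbeats 1600000

section Aux
variable {E : Type*} [NormedAddCommGroup E] [InnerProductSpace ℝ E] [FiniteDimensional ℝ E]
  {N : E → ℝ}

lemma IsNorm.zero (hN : IsNorm N) : N 0 = 0 := (hN.2.1 0).2 rfl

lemma IsNorm.le_norm (hN : IsNorm N) : ∃ C : ℝ, 0 < C ∧ ∀ x, N x ≤ C * ‖x‖ := by
  classical
  set b := Module.finBasis ℝ E with hb
  set C₀ : ℝ := ∑ i, ‖LinearMap.toContinuousLinearMap (b.coord i)‖ * N (b i) with hC₀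
  have hC₀nn : 0 ≤ C₀ :=
    Finset.sum_nonneg fun i _ => mul_nonneg (norm_nonneg _) (hN.1 _)
  refine ⟨C₀ + 1, by positivity, fun x => ?_⟩
  have h1 : N x ≤ ∑ i, |b.repr x i| * N (b i) := by
    conv_lhs => rw [← b.sum_repr x]
    refine le_trans (Finset.le_sum_of_subadditive N hN.zero.le hN.2.2.2 _ _) ?_
    refine Finset.sum_le_sum fun i _ => ?_
    rw [hN.2.2.1]
  have h2 : ∀ i, |b.repr x i| ≤ ‖LinearMap.toContinuousLinearMap (b.coord i)‖ * ‖x‖ := by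
    intro i
    have := (LinearMap.toContinuousLinearMap (b.coord i)).le_opNorm x
    simpa [Real.norm_eq_abs, Module.Basis.coord_apply] using this
  calc N x ≤ ∑ i, |b.repr x i| * N (b i) := h1
    _ ≤ ∑ i, (‖LinearMap.toContinuousLinearMap (b.coord i)‖ * ‖x‖) * N (b i) := by
        refine Finset.sum_le_sum fun i _ => mul_le_mul_of_nonneg_right (h2 i) (hN.1 _)
    _ = C₀ * ‖x‖ := by rw [hC₀, Finset.sum_mul]; congr 1; ext i; ring
    _ ≤ (C₀ + 1) * ‖x‖ := by nlinarith [norm_nonneg x]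

lemma IsNorm.continuous (hN : IsNorm N) : Continuous N := by
  obtain ⟨C, hC, hle⟩ := hN.le_norm
  have key : ∀ x y : E, |N x - N y| ≤ C * ‖x - y‖ := by
    intro x y
    have hsym : N (y - x) = N (x - y) := by
      have := hN.2.2.1 (-1) (x - y); simpa [neg_sub] using this
    have h1 : N x - N y ≤ N (x - y) := by
      have := hN.2.2.2 y (x - y); simp only [add_sub_cancel] at this; linarith
    have h2 : N y - N x ≤ N (x - y) := by
      have := hN.2.2.2 x (y - x); simp only [add_sub_cancel] at this; linarith [hsym]
    have := hle (x - y)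
    rw [abs_le]; constructor <;> linarith
  refine (LipschitzWith.of_dist_le_mul (K := C.toNNReal) fun x y => ?_).continuous
  rw [Real.dist_eq, dist_eq_norm, Real.coe_toNNReal _ hC.le]
  exact key x y

lemma IsNorm.norm_le (hN : IsNorm N) : ∃ c : ℝ, 0 < c ∧ ∀ x, c * ‖x‖ ≤ N x := by
  rcases subsingleton_or_nontrivial E with hE | hE
  · exact ⟨1, one_pos, fun x => by rw [Subsingleton.elim x 0]; simp [hN.zero]⟩
  · have hcomp : IsCompact (Metric.sphere (0:E) 1) := isCompact_sphere 0 1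
    have hne : (Metric.sphere (0:E) 1).Nonempty := NormedSpace.sphere_nonempty.mpr zero_le_one
    obtain ⟨x₀, hx₀mem, hx₀min⟩ := hcomp.exists_isMinOn hne hN.continuous.continuousOn
    have hx₀ : ‖x₀‖ = 1 := mem_sphere_zero_iff_norm.mp hx₀mem
    have hx₀ne : x₀ ≠ 0 := by intro h; rw [h, norm_zero] at hx₀; norm_num at hx₀
    have hc : 0 < N x₀ := by
      rcases lt_or_eq_of_le (hN.1 x₀) with h | h
      · exact h
      · exact absurd ((hN.2.1 x₀).1 h.symm) hx₀ne
    refine ⟨N x₀, hc, fun x => ?_⟩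
    rcases eq_or_ne x 0 with rfl | hx
    · simp [hN.zero]
    · have hnx : 0 < ‖x‖ := norm_pos_iff.2 hx
      have hmem : ‖x‖⁻¹ • x ∈ Metric.sphere (0:E) 1 := by
        rw [mem_sphere_zero_iff_norm, norm_smul, norm_inv, norm_norm]
        field_simp
      have hmin := hx₀min hmem
      have : N x = ‖x‖ * N (‖x‖⁻¹ • x) := by
        rw [hN.2.2.1, abs_inv, abs_norm]; field_simp
      rw [this]
      exact mul_le_mul_of_nonneg_left hmin hnx.le |>.trans_eq (by ring) |>.trans_eq' (by ring)

end Aux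

section Dual
variable {E : Type*} [NormedAddCommGroup E] [InnerProductSpace ℝ E] [FiniteDimensional ℝ E]
  {N : E → ℝ}

lemma dualNorm_bddAbove (hN : IsNorm N) (u : E) :
    BddAbove {r | ∃ x, N x = 1 ∧ r = ⟪u, x⟫} := by
  obtain ⟨c, hc, hlow⟩ := hN.norm_le
  refine ⟨‖u‖ * c⁻¹, ?_⟩
  rintro r ⟨x, hx1, rfl⟩
  have hxn : ‖x‖ ≤ c⁻¹ := by
    have h := hlow x; rw [hx1] at h
    have : ‖x‖ ≤ 1 / c := (le_div_iff₀ hc).mpr (by linarith)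
    simpa [one_div] using this
  calc ⟪u, x⟫ ≤ ‖u‖ * ‖x‖ := real_inner_le_norm u x
    _ ≤ ‖u‖ * c⁻¹ := mul_le_mul_of_nonneg_left hxn (norm_nonneg u)

lemma dualNorm_nonneg (hN : IsNorm N) (u : E) : 0 ≤ dualNorm N u := by
  by_cases h : ∃ x : E, N x = 1
  · obtain ⟨x, hx⟩ := h
    have hxneg : N (-x) = 1 := by
      have := hN.2.2.1 (-1) x; simpa [hx] using this
    rcases le_or_gt 0 (⟪u, x⟫) with hle | hlt
    · exact hle.trans (le_csSup (dualNorm_bddAbove hN u) ⟨x, hx, rfl⟩)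
    · have : (0:ℝ) ≤ ⟪u, -x⟫ := by rw [inner_neg_right]; linarith
      exact this.trans (le_csSup (dualNorm_bddAbove hN u) ⟨-x, hxneg, rfl⟩)
  · have : {r | ∃ x : E, N x = 1 ∧ r = ⟪u, x⟫} = ∅ := by
      ext r; simp only [Set.mem_setOf_eq, Set.mem_empty_iff_false, iff_false]
      rintro ⟨x, hx, -⟩; exact h ⟨x, hx⟩
    rw [dualNorm, this, Real.sSup_empty]

lemma dualNorm_pos (hN : IsNorm N) {u : E} (hu : u ≠ 0) : 0 < dualNorm N u := by
  have hNu : 0 < N u := by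
    rcases lt_or_eq_of_le (hN.1 u) with h | h
    · exact h
    · exact absurd ((hN.2.1 u).1 h.symm) hu
  have hmem : N ((N u)⁻¹ • u) = 1 := by
    rw [hN.2.2.1, abs_inv, abs_of_pos hNu]; field_simp
  have hval : (0:ℝ) < ⟪u, (N u)⁻¹ • u⟫ := by
    rw [real_inner_smul_right, real_inner_self_eq_norm_sq]
    have : 0 < ‖u‖ := norm_pos_iff.2 hu
    positivity
  exact hval.trans_le (le_csSup (dualNorm_bddAbove hN u) ⟨_, hmem, rfl⟩)

lemma inner_le_dualNorm (hN : IsNorm N) (u z : E) : ⟪u, z⟫ ≤ dualNorm N u * N z := by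
  rcases eq_or_ne z 0 with rfl | hz
  · simp [hN.zero]
  · have hNz : 0 < N z := by
      rcases lt_or_eq_of_le (hN.1 z) with h | h
      · exact h
      · exact absurd ((hN.2.1 z).1 h.symm) hz
    have hmem : N ((N z)⁻¹ • z) = 1 := by
      rw [hN.2.2.1, abs_inv, abs_of_pos hNz]; field_simp
    have h1 : ⟪u, (N z)⁻¹ • z⟫ ≤ dualNorm N u :=
      le_csSup (dualNorm_bddAbove hN u) ⟨_, hmem, rfl⟩
    rw [real_inner_smul_right] at h1
    calc ⟪u, z⟫ = N z * ((N z)⁻¹ * ⟪u, z⟫) := by field_simp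
      _ ≤ N z * dualNorm N u := mul_le_mul_of_nonneg_left h1 hNz.le
      _ = dualNorm N u * N z := mul_comm _ _

lemma dualNorm_smul (hN : IsNorm N) {c : ℝ} (hc : 0 < c) (u : E) :
    dualNorm N (c • u) = c * dualNorm N u := by
  have key : ∀ (d : ℝ) (v : E), 0 < d → dualNorm N (d • v) ≤ d * dualNorm N v := by
    intro d v hd
    refine Real.sSup_le ?_ (mul_nonneg hd.le (dualNorm_nonneg hN v))
    rintro r ⟨x, hx1, rfl⟩
    rw [real_inner_smul_left]
    exact mul_le_mul_of_nonneg_left (le_csSup (dualNorm_bddAbove hN v) ⟨x, hx1, rfl⟩) hd.le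
  refine le_antisymm (key c u hc) ?_
  have h2 := key c⁻¹ (c • u) (by positivity)
  rw [smul_smul, inv_mul_cancel₀ hc.ne', one_smul] at h2
  calc c * dualNorm N u ≤ c * (c⁻¹ * dualNorm N (c • u)) :=
        mul_le_mul_of_nonneg_left h2 hc.le
    _ = dualNorm N (c • u) := by field_simp

end Dual

section Op
variable {F E : Type*} [NormedAddCommGroup F] [InnerProductSpace ℝ F] [FiniteDimensional ℝ F]
  [NormedAddCommGroup E] [InnerProductSpace ℝ E] [FiniteDimensional ℝ E]
  {NF : F → ℝ} {NE : E → ℝ}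

lemma opNorm_bddAbove (hNF : IsNorm NF) (hNE : IsNorm NE) (T : F →ₗ[ℝ] E) :
    BddAbove {r | ∃ w, NF w ≤ 1 ∧ r = NE (T w)} := by
  obtain ⟨C, hC, hCle⟩ := hNE.le_norm
  obtain ⟨c, hc, hcle⟩ := hNF.norm_le
  refine ⟨C * ‖LinearMap.toContinuousLinearMap T‖ * c⁻¹, ?_⟩
  rintro r ⟨w, hw1, rfl⟩
  have hwn : ‖w‖ ≤ c⁻¹ := by
    have h := hcle w
    have : ‖w‖ ≤ 1 / c := (le_div_iff₀ hc).mpr (by linarith)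
    simpa [one_div] using this
  calc NE (T w) ≤ C * ‖T w‖ := hCle _
    _ = C * ‖LinearMap.toContinuousLinearMap T w‖ := rfl
    _ ≤ C * (‖LinearMap.toContinuousLinearMap T‖ * ‖w‖) :=
        mul_le_mul_of_nonneg_left ((LinearMap.toContinuousLinearMap T).le_opNorm w) hC.le
    _ ≤ C * (‖LinearMap.toContinuousLinearMap T‖ * c⁻¹) := by
        have := mul_le_mul_of_nonneg_left hwn (norm_nonneg (LinearMap.toContinuousLinearMap T))
        exact mul_le_mul_of_nonneg_left this hC.le
    _ = C * ‖LinearMap.toContinuousLinearMap T‖ * c⁻¹ := by ring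

lemma opNorm_nonneg (hNF : IsNorm NF) (hNE : IsNorm NE) (T : F →ₗ[ℝ] E) :
    0 ≤ opNorm NF NE T := by
  refine le_csSup (opNorm_bddAbove hNF hNE T) ⟨0, ?_, ?_⟩
  · rw [hNF.zero]; norm_num
  · rw [map_zero, hNE.zero]

lemma apply_le_opNorm (hNF : IsNorm NF) (hNE : IsNorm NE) (T : F →ₗ[ℝ] E) (w : F) :
    NE (T w) ≤ opNorm NF NE T * NF w := by
  rcases eq_or_ne w 0 with rfl | hw
  · rw [map_zero, hNE.zero, hNF.zero, mul_zero]
  · have hNw : 0 < NF w := by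
      rcases lt_or_eq_of_le (hNF.1 w) with h | h
      · exact h
      · exact absurd ((hNF.2.1 w).1 h.symm) hw
    have hmem : NF ((NF w)⁻¹ • w) ≤ 1 := by
      rw [hNF.2.2.1, abs_inv, abs_of_pos hNw]; field_simp; exact le_rfl
    have h1 : NE (T ((NF w)⁻¹ • w)) ≤ opNorm NF NE T :=
      le_csSup (opNorm_bddAbove hNF hNE T) ⟨_, hmem, rfl⟩
    rw [map_smul, hNE.2.2.1, abs_inv, abs_of_pos hNw] at h1
    calc NE (T w) = NF w * ((NF w)⁻¹ * NE (T w)) := by field_simp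
      _ ≤ NF w * opNorm NF NE T := mul_le_mul_of_nonneg_left h1 hNw.le
      _ = opNorm NF NE T * NF w := mul_comm _ _

lemma preimage_sInf_bddBelow (hNF : IsNorm NF) (A : F →ₗ[ℝ] E) (x : E) :
    BddBelow {s | ∃ w, A w = x ∧ s = NF w} := by
  refine ⟨0, ?_⟩; rintro s ⟨w, -, rfl⟩; exact hNF.1 w

lemma invNorm_bddAbove (hNF : IsNorm NF) (hNE : IsNorm NE) (A : F →ₗ[ℝ] E) :
    BddAbove {r | ∃ x ∈ LinearMap.range A, NE x ≤ 1 ∧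
      r = sInf {s | ∃ w, A w = x ∧ s = NF w}} := by
  obtain ⟨C, hC, hCle⟩ := hNF.le_norm
  obtain ⟨c, hc, hcle⟩ := hNE.norm_le
  obtain ⟨g, hg⟩ := A.rangeRestrict.exists_rightInverse_of_surjective
    (LinearMap.range_eq_top.2 A.surjective_rangeRestrict)
  set g' := LinearMap.toContinuousLinearMap g with hg'
  refine ⟨C * ‖g'‖ * c⁻¹, ?_⟩
  rintro r ⟨x, hx, hx1, rfl⟩
  have hgx : A (g ⟨x, hx⟩) = x := by
    have := LinearMap.ext_iff.1 hg ⟨x, hx⟩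
    simpa [LinearMap.rangeRestrict, Subtype.ext_iff] using this
  have hxn : ‖x‖ ≤ c⁻¹ := by
    have h := hcle x
    have : ‖x‖ ≤ 1 / c := (le_div_iff₀ hc).mpr (by linarith)
    simpa [one_div] using this
  have hnormx : ‖(⟨x, hx⟩ : LinearMap.range A)‖ = ‖x‖ := rfl
  calc sInf {s | ∃ w, A w = x ∧ s = NF w} ≤ NF (g ⟨x, hx⟩) :=
        csInf_le (preimage_sInf_bddBelow hNF A x) ⟨g ⟨x, hx⟩, hgx, rfl⟩
    _ ≤ C * ‖g ⟨x, hx⟩‖ := hCle _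
    _ = C * ‖g' ⟨x, hx⟩‖ := rfl
    _ ≤ C * (‖g'‖ * ‖x‖) := by
        have := g'.le_opNorm ⟨x, hx⟩
        rw [hnormx] at this
        exact mul_le_mul_of_nonneg_left this hC.le
    _ ≤ C * (‖g'‖ * c⁻¹) := by
        have := mul_le_mul_of_nonneg_left hxn (norm_nonneg g')
        exact mul_le_mul_of_nonneg_left this hC.le
    _ = C * ‖g'‖ * c⁻¹ := by ring

lemma invNorm_nonneg (hNF : IsNorm NF) (hNE : IsNorm NE) (A : F →ₗ[ℝ] E) :
    0 ≤ invNorm NF NE A := by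
  refine le_csSup (invNorm_bddAbove hNF hNE A) ⟨0, Submodule.zero_mem _, ?_, ?_⟩
  · rw [hNE.zero]; norm_num
  · refine le_antisymm ?_ ?_
    · exact le_csInf ⟨NF 0, 0, map_zero A, rfl⟩ (by rintro s ⟨w, -, rfl⟩; exact hNF.1 w)
    · exact csInf_le (preimage_sInf_bddBelow hNF A 0) ⟨0, map_zero A, hNF.zero.symm⟩

end Op

/-- `ν(L) ≤ ‖A⁻¹‖ ⬝ dist(A, I)` for `L = Image(A)`. -/
theorem nu_le_invNorm_mul_dist {F E : Type*}
    [NormedAddCommGroup F] [InnerProductSpace ℝ F] [FiniteDimensional ℝ F]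
    [NormedAddCommGroup E] [InnerProductSpace ℝ E] [FiniteDimensional ℝ E]
    (NF : F → ℝ) (hNF : IsNorm NF) (NE : E → ℝ) (hNE : IsNorm NE)
    (K : Set E) (hKclosed : IsClosed K) (hKconv : Convex ℝ K)
    (hKcone : ∀ ⦃c : ℝ⦄, 0 ≤ c → ∀ ⦃x⦄, x ∈ K → c • x ∈ K)
    (hKint : (interior K).Nonempty) (hKpointed : ∀ x ∈ K, -x ∈ K → x = 0)
    (A : F →ₗ[ℝ] E) (hfeas : ∃ w, A w ∈ interior K) :
    nuMeasure NE K (LinearMap.range A) ≤ invNorm NF NE A * distToInfeas NF NE K A := by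
  have hinv0 : 0 ≤ invNorm NF NE A := invNorm_nonneg hNF hNE A
  have hdist0 : 0 ≤ distToInfeas NF NE K A :=
    Real.sInf_nonneg (by rintro r ⟨B, -, rfl⟩; exact opNorm_nonneg hNF hNE _)
  have hRHS0 : 0 ≤ invNorm NF NE A * distToInfeas NF NE K A := mul_nonneg hinv0 hdist0
  rcases subsingleton_or_nontrivial E with hE | hE
  · -- trivial case: the nuMeasure set is empty
    have hempty : {r | ∃ u y, u ∈ dualCone K ∧ y ∈ (LinearMap.range A)ᗮ ∧
        dualNorm NE u = 1 ∧ r = dualNorm NE (u - y)} = ∅ := by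
      ext r
      simp only [Set.mem_setOf_eq, Set.mem_empty_iff_false, iff_false]
      rintro ⟨u, y, -, -, h1, -⟩
      have : {r | ∃ x : E, NE x = 1 ∧ r = ⟪u, x⟫} = ∅ := by
        ext s
        simp only [Set.mem_setOf_eq, Set.mem_empty_iff_false, iff_false]
        rintro ⟨x, hx, -⟩
        rw [Subsingleton.elim x 0, hNE.zero] at hx
        norm_num at hx
      rw [dualNorm, this, Real.sSup_empty] at h1
      norm_num at h1
    rw [nuMeasure, hempty, Real.sInf_empty]
    exact hRHS0
  -- nontrivial case
  -- Step 1: the nuMeasure set is bounded below by 0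
  have hSnu_bdd : BddBelow {r | ∃ u y, u ∈ dualCone K ∧ y ∈ (LinearMap.range A)ᗮ ∧
      dualNorm NE u = 1 ∧ r = dualNorm NE (u - y)} := by
    refine ⟨0, ?_⟩
    rintro r ⟨u, y, -, -, -, rfl⟩
    exact dualNorm_nonneg hNE _
  -- Step 2: the distToInfeas set is nonempty
  have hKne : K.Nonempty := hKint.mono interior_subset |>.mono (by rfl)
  have hKc : ∃ Kc : ConvexCone ℝ E, (Kc : Set E) = K := by
    refine ⟨⟨K, fun c hc x hx => hKcone hc.le hx, fun x hx y hy => ?_⟩, rfl⟩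
    have hmid : (1/2 : ℝ) • x + (1/2 : ℝ) • y ∈ K :=
      hKconv hx hy (by norm_num) (by norm_num) (by norm_num)
    have := hKcone (by norm_num : (0:ℝ) ≤ 2) hmid
    have h2 : (2:ℝ) • ((1/2 : ℝ) • x + (1/2 : ℝ) • y) = x + y := by
      rw [smul_add, smul_smul, smul_smul]; norm_num
    rwa [h2] at this
  obtain ⟨Kc, hKcEq⟩ := hKc
  have hexw : ∃ w₀ : E, w₀ ∈ dualCone K ∧ w₀ ≠ 0 := by
    have hbne : ∃ b : E, b ∉ K := by
      by_contra h
      push_neg at h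
      obtain ⟨x, hx⟩ := exists_ne (0 : E)
      exact hx (hKpointed x (h x) (h (-x)))
    obtain ⟨b, hb⟩ := hbne
    have hbc : b ∉ Kc := by rw [← SetLike.mem_coe, hKcEq]; exact hb
    obtain ⟨y, hy1, hy2⟩ : ∃ y : E, (∀ x ∈ Kc, 0 ≤ ⟪x, y⟫) ∧ ⟪y, b⟫ < 0 := by
      have h0 : (0:E) ∈ Kc := by
        obtain ⟨k, hk⟩ := hKne
        have := hKcone (le_refl (0:ℝ)) hk
        rw [zero_smul] at this
        rw [← SetLike.mem_coe, hKcEq]; exact this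
      let C : ProperCone ℝ E := ⟨Kc.toPointedCone h0, by
        show IsClosed (Kc : Set E)
        rw [hKcEq]; exact hKclosed⟩
      obtain ⟨y, hy1, hy2⟩ := ProperCone.hyperplane_separation' C (x₀ := b) hbc
      exact ⟨y, hy1, by rw [real_inner_comm]; exact hy2⟩
    refine ⟨y, fun x hx => ?_, fun h => ?_⟩
    · rw [real_inner_comm]
      exact hy1 x (by rw [← SetLike.mem_coe, hKcEq]; exact hx)
    · rw [h, inner_zero_left] at hy2; exact lt_irrefl 0 hy2
  obtain ⟨w₀, hw₀K, hw₀ne⟩ := hexw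
  have hDne : {r | ∃ B : F →ₗ[ℝ] E,
      (∃ w, w ∈ dualCone K ∧ w ≠ 0 ∧ LinearMap.adjoint B w = 0) ∧
      r = opNorm NF NE (A - B)}.Nonempty :=
    ⟨opNorm NF NE (A - 0), 0, ⟨w₀, hw₀K, hw₀ne, by simp⟩, rfl⟩
  -- Step 3: key bound for each admissible B
  have key : ∀ r ∈ {r | ∃ B : F →ₗ[ℝ] E,
      (∃ w, w ∈ dualCone K ∧ w ≠ 0 ∧ LinearMap.adjoint B w = 0) ∧
      r = opNorm NF NE (A - B)},
      nuMeasure NE K (LinearMap.range A) ≤ invNorm NF NE A * r := by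
    rintro r ⟨B, ⟨w₁, hw₁K, hw₁ne, hw₁B⟩, rfl⟩
    set d := dualNorm NE w₁ with hd
    have hdpos : 0 < d := dualNorm_pos hNE hw₁ne
    set u := d⁻¹ • w₁ with hu
    have hu1 : dualNorm NE u = 1 := by
      rw [hu, dualNorm_smul hNE (by positivity) w₁, ← hd, inv_mul_cancel₀ hdpos.ne']
    have huK : u ∈ dualCone K := by
      intro x hx
      rw [hu, real_inner_smul_left]
      exact mul_nonneg (by positivity) (hw₁K x hx)
    have huB : LinearMap.adjoint B u = 0 := by
      rw [hu, map_smul, hw₁B, smul_zero]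
    set c := invNorm NF NE A * opNorm NF NE (A - B) with hc
    have hc0 : 0 ≤ c := mul_nonneg hinv0 (opNorm_nonneg hNF hNE _)
    -- claim: ∀ x ∈ range A, ⟪u, x⟫ ≤ c * NE x
    have claim : ∀ x ∈ LinearMap.range A, ⟪u, x⟫ ≤ c * NE x := by
      have sphere_case : ∀ x ∈ LinearMap.range A, NE x = 1 → ⟪u, x⟫ ≤ c := by
        rintro x ⟨w', rfl⟩ hx1
        -- for every preimage w of x
        have hbound : ∀ w : F, A w = A w' → ⟪u, A w'⟫ ≤ opNorm NF NE (A - B) * NF w := by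
          intro w hw
          have h1 : ⟪u, A w'⟫ = ⟪u, (A - B) w⟫ := by
            have h2 : ⟪u, B w⟫ = 0 := by
              rw [← LinearMap.adjoint_inner_left, huB, inner_zero_left]
            rw [← hw, LinearMap.sub_apply, inner_sub_right, h2, sub_zero]
          rw [h1]
          calc ⟪u, (A - B) w⟫ ≤ dualNorm NE u * NE ((A - B) w) := inner_le_dualNorm hNE u _
            _ = NE ((A - B) w) := by rw [hu1, one_mul]
            _ ≤ opNorm NF NE (A - B) * NF w := apply_le_opNorm hNF hNE _ w
        -- take the inf over preimages
        have hSne : {s | ∃ w, A w = A w' ∧ s = NF w}.Nonempty := ⟨NF w', w', rfl, rfl⟩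
        have hinf : ⟪u, A w'⟫ ≤ opNorm NF NE (A - B) *
            sInf {s | ∃ w, A w = A w' ∧ s = NF w} := by
          rcases eq_or_lt_of_le (opNorm_nonneg hNF hNE (A - B)) with hop | hop
          · have := hbound w' rfl
            rw [← hop] at this ⊢
            rw [zero_mul] at this ⊢
            exact this.trans (by norm_num)
          · have h3 : (opNorm NF NE (A - B))⁻¹ * ⟪u, A w'⟫ ≤
                sInf {s | ∃ w, A w = A w' ∧ s = NF w} := by
              refine le_csInf hSne ?_
              rintro s ⟨w, hw, rfl⟩
              have h4 := hbound w hw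
              rw [inv_mul_le_iff₀ hop]
              exact h4
            calc ⟪u, A w'⟫ = opNorm NF NE (A - B) * ((opNorm NF NE (A - B))⁻¹ * ⟪u, A w'⟫) := by
                  field_simp
              _ ≤ opNorm NF NE (A - B) * sInf {s | ∃ w, A w = A w' ∧ s = NF w} :=
                  mul_le_mul_of_nonneg_left h3 hop.le
        have hm : sInf {s | ∃ w, A w = A w' ∧ s = NF w} ≤ invNorm NF NE A :=
          le_csSup (invNorm_bddAbove hNF hNE A) ⟨A w', ⟨w', rfl⟩, hx1.le, rfl⟩
        calc ⟪u, A w'⟫ ≤ opNorm NF NE (A - B) * sInf {s | ∃ w, A w = A w' ∧ s = NF w} := hinf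
          _ ≤ opNorm NF NE (A - B) * invNorm NF NE A :=
              mul_le_mul_of_nonneg_left hm (opNorm_nonneg hNF hNE _)
          _ = c := by rw [hc]; ring
      intro x hx
      rcases eq_or_ne x 0 with rfl | hxne
      · rw [inner_zero_right, hNE.zero, mul_zero]
      · have hNx : 0 < NE x := by
          rcases lt_or_eq_of_le (hNE.1 x) with h | h
          · exact h
          · exact absurd ((hNE.2.1 x).1 h.symm) hxne
        have hx' : (NE x)⁻¹ • x ∈ LinearMap.range A := Submodule.smul_mem _ _ hx
        have hx'1 : NE ((NE x)⁻¹ • x) = 1 := by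
          rw [hNE.2.2.1, abs_inv, abs_of_pos hNx]; field_simp
        have := sphere_case _ hx' hx'1
        rw [real_inner_smul_right] at this
        calc ⟪u, x⟫ = NE x * ((NE x)⁻¹ * ⟪u, x⟫) := by field_simp
          _ ≤ NE x * c := mul_le_mul_of_nonneg_left this hNx.le
          _ = c * NE x := mul_comm _ _
    -- Hahn-Banach extension
    set L := LinearMap.range A with hL
    let f : L →ₗ[ℝ] ℝ :=
      { toFun := fun x => ⟪u, (x : E)⟫
        map_add' := by intro x y; simp [inner_add_right]
        map_smul' := by intro m x; simp [inner_smul_right] }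
    let pf : E →ₗ.[ℝ] ℝ := ⟨L, f⟩
    obtain ⟨g, hg_eq, hg_le⟩ := exists_extension_of_le_sublinear pf (fun x => c * NE x)
      (fun t ht x => by
        show c * NE (t • x) = t * (c * NE x)
        rw [hNE.2.2.1, abs_of_pos ht]; ring)
      (fun x y => by
        show c * NE (x + y) ≤ c * NE x + c * NE y
        have := hNE.2.2.2 x y
        nlinarith)
      (fun x => claim (x : E) x.2)
    set v := (InnerProductSpace.toDual ℝ E).symm (LinearMap.toContinuousLinearMap g) with hv
    have hvx : ∀ x : E, ⟪v, x⟫ = g x := by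
      intro x
      rw [hv, InnerProductSpace.toDual_symm_apply]
      rfl
    set y := u - v with hy
    have hyL : y ∈ Lᗮ := by
      rw [Submodule.mem_orthogonal]
      intro z hz
      rw [real_inner_comm, hy, inner_sub_left, hvx z]
      have h5 := hg_eq ⟨z, hz⟩
      rw [LinearPMap.mk_apply] at h5
      have hfz : f ⟨z, hz⟩ = ⟪u, z⟫ := rfl
      rw [hfz] at h5
      rw [h5, sub_self]
    have huy : u - y = v := by rw [hy]; abel
    have hvle : dualNorm NE v ≤ c := by
      refine Real.sSup_le ?_ hc0
      rintro s ⟨x, hx1, rfl⟩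
      calc ⟪v, x⟫ = g x := hvx x
        _ ≤ c * NE x := hg_le x
        _ = c := by rw [hx1, mul_one]
    have hmem : dualNorm NE (u - y) ∈ {r | ∃ u' y', u' ∈ dualCone K ∧ y' ∈ Lᗮ ∧
        dualNorm NE u' = 1 ∧ r = dualNorm NE (u' - y')} := ⟨u, y, huK, hyL, hu1, rfl⟩
    calc nuMeasure NE K L ≤ dualNorm NE (u - y) := csInf_le hSnu_bdd hmem
      _ = dualNorm NE v := by rw [huy]
      _ ≤ c := hvle
      _ = invNorm NF NE A * opNorm NF NE (A - B) := hc
  -- Step 4: conclude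
  rcases eq_or_lt_of_le hinv0 with hinv | hinv
  · obtain ⟨r₀, hr₀⟩ := hDne
    have := key r₀ hr₀
    rw [← hinv, zero_mul] at this ⊢
    exact this
  · have hstep : ∀ r ∈ {r | ∃ B : F →ₗ[ℝ] E,
        (∃ w, w ∈ dualCone K ∧ w ≠ 0 ∧ LinearMap.adjoint B w = 0) ∧
        r = opNorm NF NE (A - B)},
        (invNorm NF NE A)⁻¹ * nuMeasure NE K (LinearMap.range A) ≤ r := by
      intro r hr
      have h6 := key r hr
      rw [inv_mul_le_iff₀ hinv]
      exact h6
    have := le_csInf hDne hstep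
    rw [distToInfeas]
    calc nuMeasure NE K (LinearMap.range A)
        = invNorm NF NE A * ((invNorm NF NE A)⁻¹ * nuMeasure NE K (LinearMap.range A)) := by
          field_simp
      _ ≤ invNorm NF NE A * sInf _ := mul_le_mul_of_nonneg_left this hinv.le
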